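/- For n qubits, any density operator ρ on (ℂ²)^⊗n satisfying the modified Hardy conditions (P(∀i: u_i=1) = q > 0; P(v_r = 1, u_{r+1} = 1) = 0 for all r cyclically; P(∀i: v_i = 2) = 0) is a unique pure state: ρ = |ψ⟩⟨ψ| where |ψ⟩ spans the 1-dimensional orthogonal complement of the (2^n − 1)-dimensional subspace S spanned by the product states associated with the zero-probability conditions, and q = |⟨ψ|φ_+⟩|² > 0 with |φ_+⟩ = |u_1=1⟩⋯|u_n=1⟩. -/

import Mathlib

/-- The product state `⊗ᵢ f i` of `n` qubits, as an element of `(ℂ²)^⊗n`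
modeled by `EuclideanSpace ℂ (Fin n → Fin 2)`. -/
noncomputable def prodN {n : ℕ} (f : Fin n → EuclideanSpace ℂ (Fin 2)) :
    EuclideanSpace ℂ (Fin n → Fin 2) :=
  (WithLp.equiv 2 _).symm (fun x => ∏ i, f i (x i))

lemma inner_prodN {n : ℕ} (f g : Fin n → EuclideanSpace ℂ (Fin 2)) :
    (inner ℂ (prodN f) (prodN g) : ℂ) = ∏ i, (inner ℂ (f i) (g i) : ℂ) := by
  simp only [prodN, PiLp.inner_apply, RCLike.inner_apply]
  simp only [WithLp.equiv_symm_apply, PiLp.toLp_apply, map_prod]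
  rw [Finset.prod_univ_sum (t := fun _ : Fin n => (Finset.univ : Finset (Fin 2)))
    (f := fun i k => g i k * (starRingEnd ℂ) (f i k))]
  rw [Fintype.piFinset_univ]
  congr 1
  ext x
  rw [← Finset.prod_mul_distrib]

lemma prodN_update_linear {n : ℕ} (g : Fin n → EuclideanSpace ℂ (Fin 2)) (s : Fin n)
    (a b : ℂ) (p q : EuclideanSpace ℂ (Fin 2)) (h : g s = a • p + b • q) :
    prodN g = a • prodN (Function.update g s p) + b • prodN (Function.update g s q) := by
  apply PiLp.ext
  intro x
  have happ : ∀ (w : EuclideanSpace ℂ (Fin n → Fin 2)) (cc : ℂ)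
      (w' : EuclideanSpace ℂ (Fin n → Fin 2)), (cc • w + w') x = cc * w x + w' x := by
    intro w cc w'; rfl
  have hxp : ∀ (f : Fin n → EuclideanSpace ℂ (Fin 2)), prodN f x = ∏ i, f i (x i) := by
    intro f; rfl
  have key : ∀ (z : EuclideanSpace ℂ (Fin 2)),
      prodN (Function.update g s z) x = z (x s) * ∏ i ∈ Finset.univ.erase s,
        g i (x i) := by
    intro z
    rw [hxp, ← Finset.mul_prod_erase _ _ (Finset.mem_univ s), Function.update_self]
    congr 1
    exact Finset.prod_congr rfl fun i hi =>
      by rw [Function.update_of_ne (Finset.mem_erase.mp hi).1]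
  have h1 : prodN g x = (a * p (x s) + b * q (x s)) * ∏ i ∈ Finset.univ.erase s,
      g i (x i) := by
    rw [hxp, ← Finset.mul_prod_erase _ _ (Finset.mem_univ s), h]
    rfl
  calc prodN g x = a * prodN (Function.update g s p) x
        + b * prodN (Function.update g s q) x := by rw [h1, key, key]; ring
    _ = (a • prodN (Function.update g s p) + b • prodN (Function.update g s q)) x := by
        rw [happ]; rfl

lemma trace_onb {ι : Type*} [Fintype ι] [DecidableEq ι] {E : Type*} [NormedAddCommGroup E]
    [InnerProductSpace ℂ E] [FiniteDimensional ℂ E] (b : OrthonormalBasis ι ℂ E)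
    (T : E →ₗ[ℂ] E) : LinearMap.trace ℂ E T = ∑ i, (inner ℂ (b i) (T (b i)) : ℂ) := by
  rw [LinearMap.trace_eq_matrix_trace ℂ b.toBasis, Matrix.trace]
  congr 1
  ext i
  rw [Matrix.diag_apply, LinearMap.toMatrix_apply, b.coe_toBasis_repr_apply,
    b.repr_apply_apply, b.coe_toBasis]

lemma pos_kill {E : Type*} [NormedAddCommGroup E] [InnerProductSpace ℂ E] [CompleteSpace E]
    (T : E →L[ℂ] E) (hT : T.IsPositive) (x : E) (hx : (inner ℂ x (T x) : ℂ).re = 0) :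
    T x = 0 := by
  have hsym : ∀ a b : E, (inner ℂ (T a) b : ℂ) = inner ℂ a (T b) :=
    fun a b => hT.1 a b
  set u := T x with hu
  have key : ∀ t : ℝ, 0 ≤ 2 * t * (inner ℂ x (T u) : ℂ).re + t ^ 2 * (inner ℂ u (T u) : ℂ).re := by
    intro t
    have h0 := hT.re_inner_nonneg_right (x + (t : ℂ) • u)
    rw [RCLike.re_to_complex] at h0
    have hexp : (inner ℂ (x + (t:ℂ) • u) (T (x + (t:ℂ) • u)) : ℂ).re
        = (inner ℂ x (T x) : ℂ).re + 2 * t * (inner ℂ x (T u) : ℂ).re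
          + t ^ 2 * (inner ℂ u (T u) : ℂ).re := by
      have hux : (inner ℂ u (T x) : ℂ) = (starRingEnd ℂ) (inner ℂ x (T u) : ℂ) := by
        rw [← hsym u x, ← inner_conj_symm]
      simp only [map_add, map_smul, inner_add_left, inner_add_right, inner_smul_left,
        inner_smul_right, hux]
      simp only [Complex.add_re, Complex.mul_re, Complex.conj_re, Complex.conj_im,
        Complex.ofReal_re, Complex.ofReal_im]
      ring
    rw [hexp, hx, zero_add] at h0
    exact h0
  have ha : (inner ℂ x (T u) : ℂ).re = ‖u‖ ^ 2 := by
    rw [← hsym x u]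
    rw [hu]
    rw [← @inner_self_eq_norm_sq ℂ, RCLike.re_to_complex]
  have hb : 0 ≤ (inner ℂ u (T u) : ℂ).re := by
    have := hT.re_inner_nonneg_right u
    rwa [RCLike.re_to_complex] at this
  have hzero : (inner ℂ x (T u) : ℂ).re = 0 := by
    by_contra hne
    set a := (inner ℂ x (T u) : ℂ).re
    set bb := (inner ℂ u (T u) : ℂ).re
    have hapos : 0 < a := lt_of_le_of_ne (by rw [ha]; positivity) (Ne.symm hne)
    rcases eq_or_lt_of_le hb with hb0 | hbpos
    · have := key (-1)
      rw [← hb0] at this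
      nlinarith
    · have hk := key (-(a / bb))
      have hbb : bb ≠ 0 := ne_of_gt hbpos
      have h2 : 2 * (-(a/bb)) * a + (-(a/bb))^2 * bb = -(a^2/bb) := by
        field_simp; ring
      rw [h2] at hk
      have : 0 < a^2 / bb := by positivity
      linarith
  have h4 : ‖u‖ ^ 2 = 0 := by rw [← ha, hzero]
  have h5 : ‖u‖ = 0 := by nlinarith [norm_nonneg u]
  simpa [hu] using norm_eq_zero.mp h5

lemma fin2_eq_zero : ∀ a : Fin 2, a ≠ 1 → a = 0 := by decide

lemma fin2_eq_one : ∀ a : Fin 2, a ≠ 0 → a = 1 := by decide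

lemma cycle_descent {n : ℕ} (next : Fin n → Fin n)
    (hnext : ∀ r, (next r).1 = (r.1 + 1) % n) (y : Fin n → Fin 2) (i j : Fin n)
    (hi : y i = 0) (hj : y j = 1) : ∃ r, y r = 0 ∧ y (next r) = 1 := by
  have hnpos : 0 < n := lt_of_le_of_lt (Nat.zero_le _) j.2
  by_contra hcon
  push_neg at hcon
  have hstep : ∀ r, y r = 0 → y (next r) = 0 := fun r h => fin2_eq_zero _ (hcon r h)
  have hall : ∀ m : ℕ, y ⟨(i.1 + m) % n, Nat.mod_lt _ hnpos⟩ = 0 := by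
    intro m
    induction m with
    | zero =>
      have heq : (⟨(i.1 + 0) % n, Nat.mod_lt _ hnpos⟩ : Fin n) = i :=
        Fin.ext (by simp [Nat.mod_eq_of_lt i.2])
      rw [heq]; exact hi
    | succ m ih =>
      have h := hstep _ ih
      have heq : next ⟨(i.1 + m) % n, Nat.mod_lt _ hnpos⟩
          = ⟨(i.1 + (m + 1)) % n, Nat.mod_lt _ hnpos⟩ := by
        apply Fin.ext
        rw [hnext]
        show ((i.1 + m) % n + 1) % n = (i.1 + (m + 1)) % n
        conv_rhs => rw [show i.1 + (m + 1) = (i.1 + m) + 1 by ring]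
        rw [Nat.mod_add_mod]
      rw [heq] at h; exact h
  have hfin := hall (j.1 + n - i.1)
  have heq : (⟨(i.1 + (j.1 + n - i.1)) % n, Nat.mod_lt _ hnpos⟩ : Fin n) = j := by
    apply Fin.ext
    have h1 : i.1 + (j.1 + n - i.1) = j.1 + n := by
      have := i.2; omega
    show (i.1 + (j.1 + n - i.1)) % n = j.1
    rw [h1, Nat.add_mod_right, Nat.mod_eq_of_lt j.2]
  rw [heq, hj] at hfin
  exact absurd hfin (by decide)

/-- For `n` qubits, any density operator `ρ` on `(ℂ²)^{⊗n}`
satisfying the modified Hardy conditions (`P(∀ i : u_i = 1) = q > 0`;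
`P(v_r = 1, u_{r+1} = 1) = 0` cyclically for all `r`; `P(∀ i : v_i = 2) = 0`,
probabilities by the Born rule, marginals computed by summing over a product
basis of the other parties) is a unique pure state `ρ = |ψ⟩⟨ψ|`, where `|ψ⟩`
spans the orthogonal complement of the subspace spanned by the product states
associated with the zero-probability conditions, and `q = |⟨ψ|φ_+⟩|²` with
`|φ_+⟩ = |u_1=1⟩⋯|u_n=1⟩`.
(Indexing: `|v_j=1⟩ = v j 0`, `|v_j=2⟩ = v j 1`, similarly for `u`.) -/
theorem statement15 (n : ℕ) (hn : 2 ≤ n)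
    (v u : Fin n → Fin 2 → EuclideanSpace ℂ (Fin 2))
    (hv : ∀ j, Orthonormal ℂ (v j))
    (α β : Fin n → ℂ)
    (hnorm : ∀ j, ‖α j‖ ^ 2 + ‖β j‖ ^ 2 = 1)
    (hα : ∀ j, 0 < ‖α j‖ ∧ ‖α j‖ < 1)
    (hβ : ∀ j, 0 < ‖β j‖ ∧ ‖β j‖ < 1)
    (hu0 : ∀ j, u j 0 = α j • v j 0 + β j • v j 1)
    (hu1 : ∀ j, u j 1 = (starRingEnd ℂ) (β j) • v j 0 - (starRingEnd ℂ) (α j) • v j 1)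
    (next : Fin n → Fin n)
    (hnext : ∀ r : Fin n, (next r).1 = (r.1 + 1) % n)
    -- the product states associated with the zero-probability conditions
    (Φ : Fin n → (Fin n → Fin 2) → EuclideanSpace ℂ (Fin n → Fin 2))
    (hΦ : ∀ r x, Φ r x = prodN (fun i =>
      if i = r then v i 0 else if i = next r then u i 0 else v i (x i)))
    -- `ρ` is a density operator:
    (ρ : EuclideanSpace ℂ (Fin n → Fin 2) →L[ℂ] EuclideanSpace ℂ (Fin n → Fin 2))
    (hρpos : ρ.IsPositive)
    (hρtr : LinearMap.trace ℂ _ (ρ : EuclideanSpace ℂ (Fin n → Fin 2) →ₗ[ℂ]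
      EuclideanSpace ℂ (Fin n → Fin 2)) = 1)
    -- the modified Hardy conditions:
    (q : ℝ) (hq : 0 < q)
    (h1 : (inner ℂ (prodN (fun i => u i 0)) (ρ (prodN (fun i => u i 0))) : ℂ).re = q)
    (h2 : ∀ r : Fin n, ∑ x : Fin n → Fin 2,
      (if x r = 0 ∧ x (next r) = 0 then (inner ℂ (Φ r x) (ρ (Φ r x)) : ℂ).re else 0) = 0)
    (h3 : (inner ℂ (prodN (fun i => v i 1)) (ρ (prodN (fun i => v i 1))) : ℂ).re = 0) :
    ∃ ψ : EuclideanSpace ℂ (Fin n → Fin 2), ‖ψ‖ = 1 ∧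
      -- `ρ` is the pure state `|ψ⟩⟨ψ|`
      (∀ χ, ρ χ = (inner ℂ ψ χ : ℂ) • ψ) ∧
      -- `ψ` is orthogonal to all product states of the zero conditions
      (∀ r x, (inner ℂ (Φ r x) ψ : ℂ) = 0) ∧ (inner ℂ (prodN (fun i => v i 1)) ψ : ℂ) = 0 ∧
      -- `ψ` is unique up to a phase among such vectors
      (∀ ψ' : EuclideanSpace ℂ (Fin n → Fin 2), ‖ψ'‖ = 1 →
        (∀ r x, (inner ℂ (Φ r x) ψ' : ℂ) = 0) →
        (inner ℂ (prodN (fun i => v i 1)) ψ' : ℂ) = 0 →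
        ∃ c : ℂ, ‖c‖ = 1 ∧ ψ' = c • ψ) ∧
      q = ‖(inner ℂ ψ (prodN (fun i => u i 0)) : ℂ)‖ ^ 2 := by
  classical
  haveI : NeZero n := ⟨by omega⟩
  -- basic scalar facts
  have hβ0 : ∀ j, (starRingEnd ℂ) (β j) ≠ 0 := by
    intro j
    simp only [ne_eq, map_eq_zero]
    intro h
    have := (hβ j).1
    rw [h] at this
    simp at this
  set t : Fin n → ℂ := fun j => -((starRingEnd ℂ) (α j)) / ((starRingEnd ℂ) (β j)) with ht
  have hkey : ∀ j, (starRingEnd ℂ) (α j) + t j * (starRingEnd ℂ) (β j) = 0 := by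
    intro j
    have hb := hβ0 j
    simp only [ht]
    field_simp
    ring
  -- next r ≠ r
  have hnr : ∀ r : Fin n, next r ≠ r := by
    intro r h
    have h' := hnext r
    rw [h] at h'
    rcases Nat.lt_or_ge (r.1 + 1) n with hlt | hge
    · rw [Nat.mod_eq_of_lt hlt] at h'; omega
    · have hrn : r.1 + 1 = n := by have := r.2; omega
      rw [hrn, Nat.mod_self] at h'
      omega
  set ones : Fin n → Fin 2 := fun _ => 1 with hones
  set zeros : Fin n → Fin 2 := fun _ => 0 with hzeros
  set c : (Fin n → Fin 2) → ℂ :=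
    fun y => if y = ones then 0 else ∏ j, (if y j = 1 then t j else 1) with hc
  set E : (Fin n → Fin 2) → EuclideanSpace ℂ (Fin n → Fin 2) :=
    fun y => prodN (fun i => v i (y i)) with hE
  have hvv : ∀ j (a b : Fin 2), (inner ℂ (v j a) (v j b) : ℂ) = if a = b then 1 else 0 :=
    fun j => orthonormal_iff_ite.mp (hv j)
  have hEE : ∀ x y, (inner ℂ (E x) (E y) : ℂ) = if x = y then 1 else 0 := by
    intro x y
    rw [hE]
    simp only []
    rw [inner_prodN]
    simp_rw [hvv]
    rw [Finset.prod_boole]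
    congr 1
    simp [funext_iff]
  have honE : Orthonormal ℂ E := orthonormal_iff_ite.mpr hEE
  -- orthonormal basis
  have hcard : Fintype.card (Fin n → Fin 2)
      = Module.finrank ℂ (EuclideanSpace ℂ (Fin n → Fin 2)) := by
    rw [finrank_euclideanSpace]
  have hspan : Submodule.span ℂ (Set.range E) = ⊤ := by
    have hb := (basisOfOrthonormalOfCardEqFinrank honE hcard).span_eq
    rwa [coe_basisOfOrthonormalOfCardEqFinrank] at hb
  set onbE : OrthonormalBasis (Fin n → Fin 2) ℂ (EuclideanSpace ℂ (Fin n → Fin 2)) :=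
    OrthonormalBasis.mk honE hspan.ge with honbE
  have honbE_apply : ∀ y, onbE y = E y := by
    intro y; rw [honbE, OrthonormalBasis.coe_mk]
  have hEspan : ∀ d : EuclideanSpace ℂ (Fin n → Fin 2),
      (∀ y, (inner ℂ (E y) d : ℂ) = 0) → d = 0 := by
    intro d hd
    have hall : ∀ w ∈ Submodule.span ℂ (Set.range E), (inner ℂ w d : ℂ) = 0 := by
      intro w hw
      induction hw using Submodule.span_induction with
      | mem w hw => obtain ⟨y, rfl⟩ := hw; exact hd y
      | zero => exact inner_zero_left d
      | add w₁ w₂ _ _ h₁ h₂ => rw [inner_add_left, h₁, h₂, add_zero]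
      | smul a w _ h => rw [inner_smul_left, h, mul_zero]
    have hdd := hall d (by rw [hspan]; trivial)
    rwa [inner_self_eq_zero] at hdd
  -- the candidate state
  set ψ0 : EuclideanSpace ℂ (Fin n → Fin 2) := ∑ y, c y • E y with hψ0
  have hcoef : ∀ y, (inner ℂ (E y) ψ0 : ℂ) = c y := by
    intro y
    rw [hψ0, inner_sum]
    simp_rw [inner_smul_right, hEE]
    simp
  -- decomposition of Φ r x
  have hΦE : ∀ r x, Φ r x
      = α (next r) • E (Function.update (Function.update x r 0) (next r) 0)
        + β (next r) • E (Function.update (Function.update x r 0) (next r) 1) := by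
    intro r x
    rw [hΦ]
    set g : Fin n → EuclideanSpace ℂ (Fin 2) := fun i =>
      if i = r then v i 0 else if i = next r then u i 0 else v i (x i) with hg
    have hgs : g (next r) = α (next r) • v (next r) 0 + β (next r) • v (next r) 1 := by
      rw [hg]
      simp only [if_neg (hnr r), if_pos rfl]
      exact hu0 (next r)
    rw [prodN_update_linear g (next r) (α (next r)) (β (next r)) _ _ hgs]
    have hupd : ∀ k : Fin 2, Function.update g (next r) (v (next r) k)
        = fun i => v i ((Function.update (Function.update x r 0) (next r) k) i) := by
      intro k
      funext i
      rcases eq_or_ne i (next r) with rfl | hi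
      · rw [Function.update_self, Function.update_self]
      · rw [Function.update_of_ne hi, Function.update_of_ne hi, hg]
        simp only [if_neg hi]
        rcases eq_or_ne i r with rfl | hir
        · rw [if_pos rfl, Function.update_self]
        · rw [if_neg hir, Function.update_of_ne hir]
    rw [hupd 0, hupd 1, hE]
  have hΦinner : ∀ r x (w : EuclideanSpace ℂ (Fin n → Fin 2)),
      (inner ℂ (Φ r x) w : ℂ)
      = (starRingEnd ℂ) (α (next r))
          * inner ℂ (E (Function.update (Function.update x r 0) (next r) 0)) w
        + (starRingEnd ℂ) (β (next r))
          * inner ℂ (E (Function.update (Function.update x r 0) (next r) 1)) w := by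
    intro r x w
    rw [hΦE, inner_add_left, inner_smul_left, inner_smul_left]
  -- c recursion
  have hcrec : ∀ r (x : Fin n → Fin 2), x r = 0 →
      c (Function.update x (next r) 1) = t (next r) * c (Function.update x (next r) 0) := by
    intro r x hx
    have hne : ∀ k : Fin 2, Function.update x (next r) k ≠ ones := by
      intro k h
      have h2 := congrFun h r
      rw [Function.update_of_ne (Ne.symm (hnr r)), hx] at h2
      simp only [hones] at h2
      exact absurd h2 (by decide)
    rw [hc]
    simp only [if_neg (hne 0), if_neg (hne 1)]
    rw [← Finset.mul_prod_erase _ _ (Finset.mem_univ (next r)),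
      ← Finset.mul_prod_erase _ (fun j => if Function.update x (next r) 0 j = 1 then t j else 1)
        (Finset.mem_univ (next r))]
    rw [Function.update_self, Function.update_self]
    norm_num
    left
    exact Finset.prod_congr rfl fun i hi => by
      rw [Function.update_of_ne (Finset.mem_erase.mp hi).1,
        Function.update_of_ne (Finset.mem_erase.mp hi).1]
  have hc0 : c zeros = 1 := by
    have hne : zeros ≠ ones := by
      intro h
      have h0 := congrFun h ⟨0, by omega⟩
      simp only [hzeros, hones] at h0
      exact absurd h0 (by decide)
    simp only [hc, if_neg hne, hzeros]
    simp
    exact hne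
  have hc1 : c ones = 0 := by simp only [hc]; simp
  -- ψ0 satisfies the orthogonality conditions
  have hψ0Φ : ∀ r x, (inner ℂ (Φ r x) ψ0 : ℂ) = 0 := by
    intro r x
    rw [hΦinner, hcoef, hcoef]
    have hAr : (Function.update (Function.update x r 0) (next r) 0) r = 0 := by
      rw [Function.update_of_ne (Ne.symm (hnr r)), Function.update_self]
    have h := hcrec r (Function.update (Function.update x r 0) (next r) 0) hAr
    rw [Function.update_idem, Function.update_idem] at h
    rw [h]
    linear_combination (c (Function.update (Function.update x r 0) (next r) 0)) * hkey (next r)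
  have hψ0ones : (inner ℂ (E ones) ψ0 : ℂ) = 0 := by rw [hcoef, hc1]
  -- converse: any vector satisfying the conditions is a multiple of ψ0
  have hconv : ∀ w : EuclideanSpace ℂ (Fin n → Fin 2),
      (∀ r x, (inner ℂ (Φ r x) w : ℂ) = 0) → (inner ℂ (E ones) w : ℂ) = 0 →
      w = (inner ℂ (E zeros) w : ℂ) • ψ0 := by
    intro w hw1 hw2
    set b : (Fin n → Fin 2) → ℂ := fun y => inner ℂ (E y) w with hb
    have hrec : ∀ r (x : Fin n → Fin 2), x r = 0 →
        b (Function.update x (next r) 1) = t (next r) * b (Function.update x (next r) 0) := by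
      intro r x hx
      have h := hw1 r x
      rw [hΦinner] at h
      have hxr : Function.update x r 0 = x := by
        funext i
        rcases eq_or_ne i r with rfl | hi
        · rw [Function.update_self, hx]
        · rw [Function.update_of_ne hi]
      rw [hxr] at h
      simp only [hb, ht]
      rw [div_mul_eq_mul_div, eq_div_iff (hβ0 (next r))]
      linear_combination h
    have hmain : ∀ k : ℕ, ∀ y : Fin n → Fin 2,
        (Finset.univ.filter fun j => y j = 1).card = k → b y = b zeros * c y := by
      intro k
      induction k with
      | zero =>
        intro y hy
        have hyz : y = zeros := by
          funext j
          have hj : j ∉ Finset.univ.filter fun j => y j = 1 := by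
            rw [Finset.card_eq_zero.mp hy]; exact Finset.notMem_empty j
          rw [Finset.mem_filter] at hj
          push_neg at hj
          exact fin2_eq_zero _ (hj (Finset.mem_univ j))
        rw [hyz, hc0, mul_one]
      | succ k ih =>
        intro y hy
        by_cases hyo : y = ones
        · rw [hyo, hc1, mul_zero]
          exact hw2
        · -- find a descent position
          have hj1 : ∃ j, y j = 1 := by
            have : (Finset.univ.filter fun j => y j = 1).Nonempty := by
              rw [← Finset.card_pos, hy]; omega
            obtain ⟨j, hj⟩ := this
            exact ⟨j, (Finset.mem_filter.mp hj).2⟩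
          have hi0 : ∃ i, y i = 0 := by
            by_contra hcon
            push_neg at hcon
            apply hyo
            funext i
            have := hcon i
            rw [hones]
            exact fin2_eq_one (y i) this
          obtain ⟨i0, hi0⟩ := hi0
          obtain ⟨j0, hj0⟩ := hj1
          obtain ⟨r, hr0, hr1⟩ := cycle_descent next hnext y i0 j0 hi0 hj0
          set x := Function.update y (next r) 0 with hx
          have hxr : x r = 0 := by
            rw [hx, Function.update_of_ne (Ne.symm (hnr r))]
            exact hr0
          have hxy1 : Function.update x (next r) 1 = y := by
            funext i
            rcases eq_or_ne i (next r) with rfl | hi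
            · rw [Function.update_self, hr1]
            · rw [Function.update_of_ne hi, hx, Function.update_of_ne hi]
          have hxy0 : Function.update x (next r) 0 = x := by
            rw [hx, Function.update_idem]
          have hcard : (Finset.univ.filter fun j => x j = 1).card = k := by
            have hfe : (Finset.univ.filter fun j => x j = 1)
                = (Finset.univ.filter fun j => y j = 1).erase (next r) := by
              ext j
              rcases eq_or_ne j (next r) with rfl | hj
              · simp only [Finset.mem_filter, Finset.mem_erase, Finset.mem_univ, true_and,
                  hx, Function.update_self]
                simp
              · simp only [Finset.mem_filter, Finset.mem_erase, Finset.mem_univ, true_and,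
                  hx, Function.update_of_ne hj, hj]
                tauto
            rw [hfe, Finset.card_erase_of_mem (by simp [hr1]), hy]
            omega
          have hbx := ih x hcard
          have hb1 := hrec r x hxr
          rw [hxy1, hxy0] at hb1
          have hc2 := hcrec r x hxr
          rw [hxy1, hxy0] at hc2
          rw [hb1, hc2, hbx]
          ring
    have hby : ∀ y, b y = b zeros * c y := fun y => hmain _ y rfl
    have hdiff : ∀ y, (inner ℂ (E y) (w - (inner ℂ (E zeros) w : ℂ) • ψ0) : ℂ) = 0 := by
      intro y
      rw [inner_sub_right, inner_smul_right, hcoef]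
      have hy2 := hby y
      simp only [hb] at hy2
      rw [hy2]
      ring
    have := hEspan _ hdiff
    rwa [sub_eq_zero] at this
  -- ρ kills the spanning vectors
  have hsym : ∀ a b : EuclideanSpace ℂ (Fin n → Fin 2),
      (inner ℂ (ρ a) b : ℂ) = inner ℂ a (ρ b) := fun a b => hρpos.1 a b
  have hρΦ : ∀ r x, ρ (Φ r x) = 0 := by
    intro r x
    -- first for x satisfying the condition
    have hcond : ∀ x' : Fin n → Fin 2, x' r = 0 → x' (next r) = 0 → ρ (Φ r x') = 0 := by
      intro x' h0 h0'
      apply pos_kill ρ hρpos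
      have hnonneg : ∀ x'' : Fin n → Fin 2, 0 ≤ (if x'' r = 0 ∧ x'' (next r) = 0 then
          (inner ℂ (Φ r x'') (ρ (Φ r x'')) : ℂ).re else 0) := by
        intro x''
        split
        · have := hρpos.re_inner_nonneg_right (Φ r x'')
          rwa [RCLike.re_to_complex] at this
        · exact le_refl 0
      have := (Finset.sum_eq_zero_iff_of_nonneg
        (fun x'' _ => hnonneg x'')).mp (h2 r) x' (Finset.mem_univ x')
      rw [if_pos ⟨h0, h0'⟩] at this
      exact this
    -- Φ r x does not depend on x at r and next r
    have hindep : Φ r x = Φ r (Function.update (Function.update x r 0) (next r) 0) := by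
      rw [hΦ, hΦ]
      have harg : (fun i => if i = r then v i 0 else if i = next r then u i 0 else v i (x i))
          = (fun i => if i = r then v i 0 else if i = next r then u i 0
              else v i ((Function.update (Function.update x r 0) (next r) 0) i)) := by
        funext i
        by_cases hir : i = r
        · simp [hir]
        · by_cases hin : i = next r
          · simp [hir, hin]
          · simp [hir, hin, Function.update_of_ne hin, Function.update_of_ne hir]
      rw [harg]
    rw [hindep]
    apply hcond
    · rw [Function.update_of_ne (Ne.symm (hnr r)), Function.update_self]
    · rw [Function.update_self]
  have hEones : E ones = prodN (fun i => v i 1) := by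
    simp only [hE, hones]
  have hρones : ρ (E ones) = 0 := by
    apply pos_kill ρ hρpos
    rw [hEones]
    exact h3
  -- therefore ρ maps everything into the line spanned by ψ0
  have hρform : ∀ χ, ρ χ = (inner ℂ (E zeros) (ρ χ) : ℂ) • ψ0 := by
    intro χ
    apply hconv
    · intro r x
      rw [← hsym (Φ r x) χ, hρΦ]
      exact inner_zero_left χ
    · rw [← hsym (E ones) χ, hρones]
      exact inner_zero_left χ
  -- ψ0 is nonzero; normalize
  have hψ0z : (inner ℂ (E zeros) ψ0 : ℂ) = 1 := by rw [hcoef, hc0]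
  have hψ0ne : ψ0 ≠ 0 := by
    intro h
    rw [h, inner_zero_right] at hψ0z
    exact absurd hψ0z (by norm_num)
  set N : ℝ := ‖ψ0‖ with hN
  have hNpos : 0 < N := by rw [hN, norm_pos_iff]; exact hψ0ne
  have hNne : (N : ℂ) ≠ 0 := by
    simp only [ne_eq, Complex.ofReal_eq_zero]
    exact ne_of_gt hNpos
  set ψ : EuclideanSpace ℂ (Fin n → Fin 2) := ((N : ℂ))⁻¹ • ψ0 with hψdef
  have hψnorm : ‖ψ‖ = 1 := by
    rw [hψdef, norm_smul, norm_inv, Complex.norm_real, Real.norm_eq_abs,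
      abs_of_pos hNpos, ← hN]
    field_simp
  have hψ0ψ : ψ0 = (N : ℂ) • ψ := by
    rw [hψdef, smul_smul, mul_inv_cancel₀ hNne, one_smul]
  -- determine the coefficient function
  set g : EuclideanSpace ℂ (Fin n → Fin 2) → ℂ := fun χ => inner ℂ (E zeros) (ρ χ) with hg
  set κ : ℂ := g ψ0 with hκ
  have hρg : ∀ χ, ρ χ = g χ • ψ0 := hρform
  have hcoefrel : ∀ χ, g χ * (N : ℂ) ^ 2 = (starRingEnd ℂ) κ * inner ℂ ψ0 χ := by
    intro χ
    have h1' : (inner ℂ ψ0 (ρ χ) : ℂ) = g χ * (N : ℂ) ^ 2 := by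
      rw [hρg χ, inner_smul_right, inner_self_eq_norm_sq_to_K, ← hN]
      rfl
    have h2' : (inner ℂ ψ0 (ρ χ) : ℂ) = (starRingEnd ℂ) κ * inner ℂ ψ0 χ := by
      rw [← hsym ψ0 χ, hρg ψ0, ← hκ, inner_smul_left]
    rw [← h1']
    exact h2'

  -- trace condition forces κ = 1
  have htrace : (starRingEnd ℂ) κ = 1 := by
    have htr := hρtr
    rw [trace_onb onbE] at htr
    simp only [ContinuousLinearMap.coe_coe] at htr
    have hterm : ∀ y, (inner ℂ (onbE y) (ρ (onbE y)) : ℂ)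
        = (starRingEnd ℂ) κ / (N : ℂ) ^ 2 * (inner ℂ ψ0 (E y) * inner ℂ (E y) ψ0) := by
      intro y
      rw [honbE_apply]
      rw [hρg (E y), inner_smul_right]
      have := hcoefrel (E y)
      have hNsq : ((N : ℂ)) ^ 2 ≠ 0 := pow_ne_zero 2 hNne
      field_simp
      linear_combination (inner ℂ (E y) ψ0 : ℂ) * this
    rw [Finset.sum_congr rfl (fun y _ => hterm y)] at htr
    rw [← Finset.mul_sum] at htr
    have hpars : ∑ y, (inner ℂ ψ0 (E y) : ℂ) * inner ℂ (E y) ψ0 = (N : ℂ) ^ 2 := by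
      have hp := onbE.sum_inner_mul_inner ψ0 ψ0
      simp_rw [honbE_apply] at hp
      rw [hp, inner_self_eq_norm_sq_to_K, ← hN]
      rfl
    rw [hpars] at htr
    have hNsq : ((N : ℂ)) ^ 2 ≠ 0 := pow_ne_zero 2 hNne
    rwa [div_mul_cancel₀ _ hNsq] at htr
  -- the pure state formula
  have hpure : ∀ χ, ρ χ = (inner ℂ ψ χ : ℂ) • ψ := by
    intro χ
    rw [hρg χ, hψ0ψ, smul_smul]
    congr 1
    have h := hcoefrel χ
    rw [htrace, one_mul] at h
    rw [hψ0ψ, inner_smul_left, Complex.conj_ofReal] at h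
    have h2 : (N : ℂ) * (g χ * (N : ℂ)) = (N : ℂ) * (inner ℂ ψ χ : ℂ) := by
      linear_combination h
    exact mul_left_cancel₀ hNne h2
  -- assemble
  refine ⟨ψ, hψnorm, hpure, ?_, ?_, ?_, ?_⟩
  · intro r x
    rw [hψdef, inner_smul_right, hψ0Φ, mul_zero]
  · show (inner ℂ (E ones) ψ : ℂ) = 0
    rw [hψdef, inner_smul_right, hψ0ones, mul_zero]
  · intro ψ' hn' hΦ' ho'
    have h := hconv ψ' hΦ' ho'
    refine ⟨(inner ℂ (E zeros) ψ' : ℂ) * (N : ℂ), ?_, ?_⟩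
    · have : ‖ψ'‖ = ‖(inner ℂ (E zeros) ψ' : ℂ) * (N : ℂ)‖ * ‖ψ‖ := by
        rw [← norm_smul, ← smul_smul, ← hψ0ψ, ← h]
      rw [hn', hψnorm, mul_one] at this
      exact this.symm
    · rw [← smul_smul, ← hψ0ψ, ← h]
  · have hρφ := hpure (prodN (fun i => u i 0))
    rw [hρφ, inner_smul_right] at h1
    set z : ℂ := inner ℂ ψ (prodN (fun i => u i 0)) with hz
    have hconj : (inner ℂ (prodN (fun i => u i 0)) ψ : ℂ) = (starRingEnd ℂ) z := by
      rw [hz, inner_conj_symm]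
    rw [hconj] at h1
    rw [← h1]
    rw [Complex.mul_conj]
    rw [Complex.ofReal_re]
    rw [Complex.normSq_eq_norm_sq]
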